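/- arXiv:0907.3086 — 2 statements merged into one kernel-verified Lean document; each statement's English description precedes it below -/
import Mathlib

section
/- Let p and q be odd positive integers. If a_1, …, a_m is a cycle of T_{p,q} of length m in which not all the a_i are equal, then p^m < 2^{S_m} < (p + q/a_min)^m. -/
/-- The generalized odd-step map: `T p q x = (px+q)/2^{v₂(px+q)}`. -/
def T (p q x : ℕ) : ℕ := (p * x + q) / 2 ^ (padicValNat 2 (p * x + q))

theorem stmt_15 (p q : ℕ) (hp : 0 < p) (hq : 0 < q)
    (hpodd : Odd p) (hqodd : Odd q)
    (m : ℕ) (hm : 1 ≤ m) (a : ℕ → ℕ)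
    (hpos : ∀ i, 1 ≤ i → i ≤ m → 0 < a i)
    (hodd : ∀ i, 1 ≤ i → i ≤ m → Odd (a i))
    (hstep : ∀ i, 1 ≤ i → i < m → a (i + 1) = T p q (a i))
    (hloop : T p q (a m) = a 1)
    (hne : ∃ i ∈ Finset.Icc 1 m, ∃ j ∈ Finset.Icc 1 m, a i ≠ a j)
    (S : ℕ → ℕ)
    (hS : ∀ r, S r = ∑ i ∈ Finset.Icc 1 r, padicValNat 2 (p * a i + q))
    (amin : ℕ)
    (hamin : amin = (Finset.Icc 1 m).inf' (Finset.nonempty_Icc.mpr hm) a) :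
    (p : ℝ) ^ m < (2 : ℝ) ^ (S m) ∧
    (2 : ℝ) ^ (S m) < ((p : ℝ) + (q : ℝ) / (amin : ℝ)) ^ m := by
  classical
  set s : Finset ℕ := Finset.Icc 1 m with hs
  set k : ℕ → ℕ := fun i => padicValNat 2 (p * a i + q) with hk
  set σ : ℕ → ℕ := fun i => if i = m then 1 else i + 1 with hσ
  set τ : ℕ → ℕ := fun j => if j = 1 then m else j - 1 with hτ
  -- key cycle identity in ℕ
  have key : ∀ i ∈ s, 2 ^ (k i) * a (σ i) = p * a i + q := by
    intro i hi
    simp only [hs, Finset.mem_Icc] at hi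
    have hdvd : 2 ^ (k i) ∣ p * a i + q := pow_padicValNat_dvd
    have hav : a (σ i) = (p * a i + q) / 2 ^ (k i) := by
      by_cases him : i = m
      · simp only [hσ, him, if_pos rfl]
        rw [← hloop]; rfl
      · simp only [hσ, if_neg him]
        rw [hstep i hi.1 (lt_of_le_of_ne hi.2 him)]; rfl
    rw [hav, Nat.mul_div_cancel' hdvd]
  -- permutation of product
  have hperm : ∏ i ∈ s, a (σ i) = ∏ i ∈ s, a i := by
    apply Finset.prod_nbij' σ τ
    · intro i hi; simp only [hs, Finset.mem_Icc] at hi ⊢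
      simp only [hσ]; split_ifs <;> omega
    · intro j hj; simp only [hs, Finset.mem_Icc] at hj ⊢
      simp only [hτ]; split_ifs <;> omega
    · intro i hi; simp only [hs, Finset.mem_Icc] at hi
      simp only [hσ, hτ]; split_ifs <;> omega
    · intro j hj; simp only [hs, Finset.mem_Icc] at hj
      simp only [hσ, hτ]; split_ifs <;> omega
    · intro i _; rfl
  -- main product identity in ℕ
  have hmain : 2 ^ (S m) * ∏ i ∈ s, a i = ∏ i ∈ s, (p * a i + q) := by
    calc 2 ^ (S m) * ∏ i ∈ s, a i
        = (∏ i ∈ s, 2 ^ (k i)) * ∏ i ∈ s, a (σ i) := by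
          rw [hperm, Finset.prod_pow_eq_pow_sum, hS m]
      _ = ∏ i ∈ s, (2 ^ (k i) * a (σ i)) := (Finset.prod_mul_distrib).symm
      _ = ∏ i ∈ s, (p * a i + q) := Finset.prod_congr rfl key
  -- positivity facts
  have hapos : ∀ i ∈ s, 0 < a i := by
    intro i hi; simp only [hs, Finset.mem_Icc] at hi; exact hpos i hi.1 hi.2
  have hane : ∀ i ∈ s, ((a i : ℝ)) ≠ 0 := by
    intro i hi; exact_mod_cast (hapos i hi).ne'
  have hprodpos : 0 < ∏ i ∈ s, (a i : ℝ) :=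
    Finset.prod_pos fun i hi => by exact_mod_cast hapos i hi
  -- real version: 2^(S m) = ∏ (p + q / a i)
  have heq : (2 : ℝ) ^ (S m) = ∏ i ∈ s, ((p : ℝ) + (q : ℝ) / (a i : ℝ)) := by
    have hmainR : (2 : ℝ) ^ (S m) * ∏ i ∈ s, (a i : ℝ)
        = ∏ i ∈ s, ((p : ℝ) * (a i : ℝ) + (q : ℝ)) := by
      exact_mod_cast hmain
    have h2 : ∏ i ∈ s, ((p : ℝ) + (q : ℝ) / (a i : ℝ))
        = (∏ i ∈ s, ((p : ℝ) * (a i : ℝ) + (q : ℝ))) / ∏ i ∈ s, (a i : ℝ) := by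
      rw [← Finset.prod_div_distrib]
      apply Finset.prod_congr rfl
      intro i hi
      field_simp [hane i hi]
    rw [h2, ← hmainR, mul_div_assoc, div_self hprodpos.ne', mul_one]
  have hmemcard : s.card = m := by simp [hs]
  -- the minimum is attained and positive
  obtain ⟨i0, hi0s, hi0⟩ := Finset.exists_mem_eq_inf' (Finset.nonempty_Icc.mpr hm) a
  have haminle : ∀ i ∈ s, amin ≤ a i := by
    intro i hi; rw [hamin]; exact Finset.inf'_le a hi
  have haminpos : 0 < amin := by rw [hamin, hi0]; exact hapos i0 hi0s
  -- some element strictly above amin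
  obtain ⟨i, his, j, hjs, hij⟩ := hne
  have hstrict : ∃ l ∈ s, amin < a l := by
    by_cases h : a i = amin
    · exact ⟨j, hjs, lt_of_le_of_ne (haminle j hjs) (fun hh => hij (by rw [h, hh]))⟩
    · exact ⟨i, his, lt_of_le_of_ne (haminle i his) (Ne.symm h)⟩
  constructor
  · rw [heq]
    calc (p : ℝ) ^ m = ∏ _i ∈ s, (p : ℝ) := by rw [Finset.prod_const, hmemcard]
      _ < ∏ i ∈ s, ((p : ℝ) + (q : ℝ) / (a i : ℝ)) := by
          apply Finset.prod_lt_prod_of_nonempty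
          · intro i hi; exact_mod_cast hp
          · intro i hi
            have : 0 < (q : ℝ) / (a i : ℝ) := by
              apply div_pos (by exact_mod_cast hq)
              exact_mod_cast hapos i hi
            linarith
          · exact Finset.nonempty_Icc.mpr hm
  · rw [heq]
    calc ∏ i ∈ s, ((p : ℝ) + (q : ℝ) / (a i : ℝ))
        < ∏ _i ∈ s, ((p : ℝ) + (q : ℝ) / (amin : ℝ)) := by
          apply Finset.prod_lt_prod
          · intro i hi
            have h1 : (0:ℝ) ≤ (q : ℝ) / (a i : ℝ) := by positivity
            have : (0:ℝ) < p := by exact_mod_cast hp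
            linarith
          · intro i hi
            have h1 : (amin : ℝ) ≤ (a i : ℝ) := by exact_mod_cast haminle i hi
            have h2 : (0:ℝ) < amin := by exact_mod_cast haminpos
            exact add_le_add_right (div_le_div_of_nonneg_left (by positivity) h2 h1) _
          · obtain ⟨l, hls, hl⟩ := hstrict
            have h1 : (amin : ℝ) < (a l : ℝ) := by exact_mod_cast hl
            have h2 : (0:ℝ) < amin := by exact_mod_cast haminpos
            have h3 : (0:ℝ) < q := by exact_mod_cast hq
            exact ⟨l, hls, add_lt_add_right (div_lt_div_of_pos_left h3 h2 h1) _⟩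
      _ = ((p : ℝ) + (q : ℝ) / (amin : ℝ)) ^ m := by rw [Finset.prod_const, hmemcard]
end

section
/- Let p and q be odd positive integers. If a_1, …, a_m is a cycle of T_{p,q} of length m in which not all the a_i are equal, then a_min < q/(p·(2^{(1 − fract(m·log₂ p))/m} − 1)), where fract denotes the fractional part. -/
theorem stmt_17 (p q : ℕ) (hp : 0 < p) (hq : 0 < q)
    (hpodd : Odd p) (hqodd : Odd q)
    (m : ℕ) (hm : 1 ≤ m) (a : ℕ → ℕ)
    (hpos : ∀ i, 1 ≤ i → i ≤ m → 0 < a i)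
    (hodd : ∀ i, 1 ≤ i → i ≤ m → Odd (a i))
    (hstep : ∀ i, 1 ≤ i → i < m → a (i + 1) = T p q (a i))
    (hloop : T p q (a m) = a 1)
    (hne : ∃ i ∈ Finset.Icc 1 m, ∃ j ∈ Finset.Icc 1 m, a i ≠ a j)
    (amin : ℕ)
    (hamin : amin = (Finset.Icc 1 m).inf' (Finset.nonempty_Icc.mpr hm) a) :
    (amin : ℝ) < (q : ℝ) / ((p : ℝ) * ((2 : ℝ)
      ^ ((1 - Int.fract ((m : ℝ) * Real.logb 2 (p : ℝ))) / (m : ℝ)) - 1)) := by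
  have hmR : (0:ℝ) < (m:ℝ) := by exact_mod_cast hm
  have hmR' : (m:ℝ) ≠ 0 := ne_of_gt hmR
  have hpR : (0:ℝ) < (p:ℝ) := by exact_mod_cast hp
  have hqR : (0:ℝ) < (q:ℝ) := by exact_mod_cast hq
  set s := Finset.Icc 1 m with hs
  have hsne : s.Nonempty := Finset.nonempty_Icc.mpr hm
  have hps : ∀ i ∈ s, 0 < a i := fun i hi =>
    hpos i (Finset.mem_Icc.mp hi).1 (Finset.mem_Icc.mp hi).2
  -- amin facts
  obtain ⟨k, hk, hak⟩ := Finset.exists_mem_eq_inf' hsne a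
  have haminpos : 0 < amin := by rw [hamin, hak]; exact hps k hk
  have hAR : (0:ℝ) < (amin:ℝ) := by exact_mod_cast haminpos
  have hamin_le : ∀ i ∈ s, amin ≤ a i := fun i hi => hamin ▸ Finset.inf'_le a hi
  obtain ⟨i0, hi0, j0, hj0, hij⟩ := hne
  have hstrict : ∃ i ∈ s, amin < a i := by
    rcases lt_or_eq_of_le (hamin_le i0 hi0) with h | h
    · exact ⟨i0, hi0, h⟩
    rcases lt_or_eq_of_le (hamin_le j0 hj0) with h' | h'
    · exact ⟨j0, hj0, h'⟩
    · exact absurd (by omega : a i0 = a j0) hij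
  -- the cycle structure
  set v : ℕ → ℕ := fun i => padicValNat 2 (p * a i + q) with hv
  set next : ℕ → ℕ := fun i => if i = m then 1 else i + 1 with hnext
  have hTmul : ∀ x : ℕ, T p q x * 2 ^ (padicValNat 2 (p * x + q)) = p * x + q :=
    fun x => Nat.div_mul_cancel pow_padicValNat_dvd
  have hkey : ∀ i ∈ s, a (next i) * 2 ^ (v i) = p * a i + q := by
    intro i hi
    obtain ⟨h1, h2⟩ := Finset.mem_Icc.mp hi
    by_cases him : i = m
    · subst him
      simp only [hnext, if_pos rfl]
      rw [← hloop]
      exact hTmul (a i)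
    · simp only [hnext, if_neg him]
      rw [hstep i h1 (lt_of_le_of_ne h2 him)]
      exact hTmul (a i)
  have hprodnext : ∏ i ∈ s, a (next i) = ∏ i ∈ s, a i := by
    apply Finset.prod_nbij' next (fun i => if i = 1 then m else i - 1)
    · intro i hi
      rw [hs, Finset.mem_Icc] at hi ⊢
      simp only [hnext]
      split <;> omega
    · intro i hi
      rw [hs, Finset.mem_Icc] at hi ⊢
      split <;> omega
    · intro i hi
      rw [hs, Finset.mem_Icc] at hi
      simp only [hnext]
      rcases eq_or_ne i m with h | h
      · rw [if_pos h, if_pos rfl]; omega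
      · rw [if_neg h, if_neg (by omega)]; omega
    · intro i hi
      rw [hs, Finset.mem_Icc] at hi
      simp only [hnext]
      rcases eq_or_ne i 1 with h | h
      · rw [if_pos h, if_pos rfl]; omega
      · rw [if_neg h, if_neg (by omega)]; omega
    · intro i _; rfl
  set V : ℕ := ∑ i ∈ s, v i with hV
  have hprodeq : (∏ i ∈ s, a i) * 2 ^ V = ∏ i ∈ s, (p * a i + q) := by
    rw [hV, ← hprodnext, ← Finset.prod_pow_eq_pow_sum, ← Finset.prod_mul_distrib]
    exact Finset.prod_congr rfl hkey
  -- cast to ℝ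
  set P : ℝ := ∏ i ∈ s, (a i : ℝ) with hP
  have hPpos : 0 < P := Finset.prod_pos fun i hi => by exact_mod_cast hps i hi
  have hprodeqR : P * (2:ℝ) ^ V = ∏ i ∈ s, ((p:ℝ) * a i + q) := by
    have := congrArg (fun n : ℕ => (n : ℝ)) hprodeq
    push_cast at this
    convert this using 2
  set B : ℝ := (p:ℝ) + (q:ℝ) / (amin:ℝ) with hB
  clear_value B
  -- lower bound : p^m < 2^V
  have hlow : (p:ℝ) ^ m * P < P * (2:ℝ) ^ V := by
    rw [hprodeqR]
    calc (p:ℝ) ^ m * P = ∏ i ∈ s, ((p:ℝ) * a i) := by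
          rw [Finset.prod_mul_distrib, Finset.prod_const, hP, Nat.card_Icc]
          simp
      _ < ∏ i ∈ s, ((p:ℝ) * a i + q) := by
          apply Finset.prod_lt_prod_of_nonempty _ _ hsne
          · intro i hi
            have := hps i hi
            positivity
          · intro i hi
            linarith
  -- upper bound : 2^V < B^m
  have hupp : P * (2:ℝ) ^ V < B ^ m * P := by
    rw [hprodeqR]
    calc ∏ i ∈ s, ((p:ℝ) * a i + q) < ∏ i ∈ s, (B * a i) := by
          apply Finset.prod_lt_prod
          · intro i hi
            have := hps i hi
            positivity
          · intro i hi
            have h1 : (amin:ℝ) ≤ (a i : ℝ) := by exact_mod_cast hamin_le i hi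
            have h2 : (q:ℝ) ≤ (q:ℝ) / amin * a i := by
              rw [div_mul_eq_mul_div, le_div_iff₀ hAR]
              nlinarith
            show (p:ℝ) * a i + q ≤ B * a i
            have h3 : B * a i = (p:ℝ) * a i + (q:ℝ) / amin * a i := by
              rw [hB]; ring
            linarith
          · obtain ⟨i1, hi1, hlt1⟩ := hstrict
            refine ⟨i1, hi1, ?_⟩
            have h1 : (amin:ℝ) < (a i1 : ℝ) := by exact_mod_cast hlt1
            have h2 : (q:ℝ) < (q:ℝ) / amin * a i1 := by
              rw [div_mul_eq_mul_div, lt_div_iff₀ hAR]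
              nlinarith
            show (p:ℝ) * a i1 + q < B * a i1
            have h3 : B * a i1 = (p:ℝ) * a i1 + (q:ℝ) / amin * a i1 := by
              rw [hB]; ring
            linarith
      _ = B ^ m * P := by
          rw [Finset.prod_mul_distrib, Finset.prod_const, hP, Nat.card_Icc]
          simp
  have hlow' : (p:ℝ) ^ m < (2:ℝ) ^ V := by
    have := (mul_lt_mul_iff_of_pos_right hPpos).mp (by linarith [hlow] : (p:ℝ) ^ m * P < (2:ℝ) ^ V * P)
    exact this
  have hupp' : (2:ℝ) ^ V < B ^ m := by
    have := (mul_lt_mul_iff_of_pos_right hPpos).mp (by linarith [hupp] : (2:ℝ) ^ V * P < B ^ m * P)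
    exact this
  -- from lower bound: V > m * logb 2 p
  set L : ℝ := (m:ℝ) * Real.logb 2 (p:ℝ) with hL
  have hVgt : L < (V:ℝ) := by
    have h1 : Real.logb 2 ((p:ℝ) ^ m) < Real.logb 2 ((2:ℝ) ^ V) :=
      Real.logb_lt_logb one_lt_two (by positivity) hlow'
    rw [Real.logb_pow, Real.logb_pow, Real.logb_self_eq_one one_lt_two, mul_one] at h1
    exact h1
  set f : ℝ := Int.fract L with hf
  have hfloor : L + (1 - f) ≤ (V:ℝ) := by
    have h1 : (⌊L⌋ : ℤ) < (V : ℤ) := Int.floor_lt.mpr (by exact_mod_cast hVgt)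
    have h2 : ((⌊L⌋ : ℤ) : ℝ) + 1 ≤ ((V:ℤ) : ℝ) := by exact_mod_cast h1
    have h3 : (⌊L⌋ : ℝ) + f = L := Int.floor_add_fract L
    push_cast at h2
    linarith
  have hfone : f < 1 := Int.fract_lt_one L
  have hfnonneg : 0 ≤ f := Int.fract_nonneg L
  set c : ℝ := (1 - f) / (m:ℝ) with hc
  have hcpos : 0 < c := div_pos (by linarith) hmR
  -- p * 2^c ≤ 2^(V/m)
  have hmid1 : (p:ℝ) * (2:ℝ) ^ c ≤ (2:ℝ) ^ ((V:ℝ) / m) := by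
    have h1 : (2:ℝ) ^ ((L + (1 - f)) / m) ≤ (2:ℝ) ^ ((V:ℝ) / m) :=
      Real.rpow_le_rpow_of_exponent_le one_le_two (by gcongr)
    have h2 : (L + (1 - f)) / m = Real.logb 2 (p:ℝ) + c := by
      rw [hL, hc]
      field_simp
    rw [h2, Real.rpow_add (by norm_num), Real.rpow_logb (by norm_num) (by norm_num) hpR] at h1
    exact h1
  -- 2^(V/m) < B
  have hmid2 : (2:ℝ) ^ ((V:ℝ) / m) < B := by
    have hBpos : 0 < B := by rw [hB]; positivity
    have h1 : ((2:ℝ) ^ V) ^ ((1:ℝ)/m) < (B ^ m) ^ ((1:ℝ)/m) :=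
      Real.rpow_lt_rpow (by positivity) hupp' (one_div_pos.mpr hmR)
    rw [← Real.rpow_natCast (2:ℝ) V, ← Real.rpow_natCast B m,
      ← Real.rpow_mul (by norm_num), ← Real.rpow_mul hBpos.le,
      mul_one_div, mul_one_div, div_self hmR', Real.rpow_one] at h1
    exact h1
  -- conclude
  have hkey2 : (p:ℝ) * ((2:ℝ) ^ c - 1) < (q:ℝ) / amin := by
    have := lt_of_le_of_lt hmid1 hmid2
    rw [hB] at this
    nlinarith
  have hdpos : (0:ℝ) < (p:ℝ) * ((2:ℝ) ^ c - 1) := by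
    have h2c : (1:ℝ) < (2:ℝ) ^ c :=
      (Real.one_lt_rpow_iff_of_pos (by norm_num)).mpr (Or.inl ⟨one_lt_two, hcpos⟩)
    have : (0:ℝ) < (2:ℝ) ^ c - 1 := by linarith
    exact mul_pos hpR this
  rw [lt_div_iff₀ hdpos]
  have := (lt_div_iff₀ hAR).mp hkey2
  linarith
end
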